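/- Let 0 < m < n be integers of the form n = 2lν, m = 2lμ with 0 < μ < ν coprime, and t_1 = π/(2n). Then |Ψ(π/2, t_1)| = |sin(2lμ t_1)| (1/sin²(π/4 − t_1/2) + 1/sin²(π/4 + t_1/2)) ≥ C for a constant C > 0 independent of l, where Ψ(t,s) = sin(m(t−s))/sin²((t−s)/2) − sin(m(t+s))/sin²((t+s)/2). -/

import Mathlib

open Real

/-- `Ψ(t,s) = sin(m(t-s))/sin²((t-s)/2) − sin(m(t+s))/sin²((t+s)/2)`. -/
noncomputable def vpPsi (m : ℕ) (t s : ℝ) : ℝ :=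
  Real.sin (m * (t - s)) / Real.sin ((t - s) / 2) ^ 2
    - Real.sin (m * (t + s)) / Real.sin ((t + s) / 2) ^ 2

/-- for `n = 2lν`, `m = 2lμ` (`0 < μ < ν` coprime) and `t₁ = π/(2n)`,
`|Ψ(π/2, t₁)| = |sin(2lμ t₁)| (1/sin²(π/4 - t₁/2) + 1/sin²(π/4 + t₁/2)) ≥ C`
with `C > 0` independent of `l`. -/
theorem stmt_18 (μ ν : ℕ) (hμ : 0 < μ) (hμν : μ < ν) (hcop : Nat.Coprime μ ν) :
    ∃ C : ℝ, 0 < C ∧ ∀ l : ℕ, 1 ≤ l →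
      |vpPsi (2 * l * μ) (π / 2) (π / (2 * ((2 * l * ν : ℕ) : ℝ)))| =
        |Real.sin (2 * l * μ * (π / (2 * ((2 * l * ν : ℕ) : ℝ))))| *
          (1 / Real.sin (π / 4 - π / (2 * ((2 * l * ν : ℕ) : ℝ)) / 2) ^ 2
            + 1 / Real.sin (π / 4 + π / (2 * ((2 * l * ν : ℕ) : ℝ)) / 2) ^ 2) ∧
      C ≤ |vpPsi (2 * l * μ) (π / 2) (π / (2 * ((2 * l * ν : ℕ) : ℝ)))| := by
  have hν : 0 < ν := hμ.trans hμν
  have hμν' : (μ : ℝ) < ν := by exact_mod_cast hμν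
  have hν' : (0 : ℝ) < ν := by exact_mod_cast hν
  have hμ' : (0 : ℝ) < μ := by exact_mod_cast hμ
  have hs : 0 < Real.sin (μ * π / (2 * ν)) := by
    apply Real.sin_pos_of_pos_of_lt_pi
    · positivity
    · rw [div_lt_iff₀ (by positivity)]
      nlinarith [Real.pi_pos]
  refine ⟨Real.sin (μ * π / (2 * ν)), hs, fun l hl => ?_⟩
  have hl' : (1 : ℝ) ≤ l := by exact_mod_cast hl
  have hl0 : (0 : ℝ) < l := by linarith
  set t : ℝ := π / (2 * ((2 * l * ν : ℕ) : ℝ)) with ht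
  have hcast : ((2 * l * ν : ℕ) : ℝ) = 2 * l * ν := by push_cast; ring
  have ht0 : 0 < t := by
    rw [ht, hcast]; positivity
  have ht8 : t ≤ π / 8 := by
    rw [ht, hcast]
    rw [div_le_div_iff₀ (by positivity) (by norm_num)]
    have hν2 : (2 : ℝ) ≤ ν := by exact_mod_cast (by omega : 2 ≤ ν)
    have hlv : (2 : ℝ) ≤ l * ν := by nlinarith
    nlinarith [Real.pi_pos]
  -- value of m * t
  have hmt : ((2 * l * μ : ℕ) : ℝ) * t = μ * π / (2 * ν) := by
    rw [ht, hcast]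
    push_cast
    field_simp
  have hmt' : (2 : ℝ) * l * μ * t = μ * π / (2 * ν) := by
    rw [← hmt]; push_cast; ring
  -- decomposition of the sine arguments
  have hkey1 : ((2 * l * μ : ℕ) : ℝ) * (π / 2 - t) =
      (l * μ : ℕ) * π - ((2 * l * μ : ℕ) : ℝ) * t := by push_cast; ring
  have hkey2 : ((2 * l * μ : ℕ) : ℝ) * (π / 2 + t) =
      ((2 * l * μ : ℕ) : ℝ) * t + (l * μ : ℕ) * π := by push_cast; ring
  have hsin1 : Real.sin (((2 * l * μ : ℕ) : ℝ) * (π / 2 - t)) =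
      -((-1) ^ (l * μ) * Real.sin (μ * π / (2 * ν))) := by
    rw [hkey1, Real.sin_nat_mul_pi_sub, hmt]
  have hsin2 : Real.sin (((2 * l * μ : ℕ) : ℝ) * (π / 2 + t)) =
      (-1) ^ (l * μ) * Real.sin (μ * π / (2 * ν)) := by
    rw [hkey2, Real.sin_add_nat_mul_pi, hmt]
  -- the denominators
  set a : ℝ := Real.sin (π / 4 - t / 2) with ha
  set b : ℝ := Real.sin (π / 4 + t / 2) with hb
  have hpi : 0 < π := Real.pi_pos
  have ha0 : 0 < a := by
    apply Real.sin_pos_of_pos_of_lt_pi <;> [skip; linarith]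
    linarith
  have ha1 : a ≤ 1 := Real.sin_le_one _
  have hb0 : 0 < b := by
    apply Real.sin_pos_of_pos_of_lt_pi <;> [skip; linarith]
    linarith
  have hb1 : b ≤ 1 := Real.sin_le_one _
  have harg1 : (π / 2 - t) / 2 = π / 4 - t / 2 := by ring
  have harg2 : (π / 2 + t) / 2 = π / 4 + t / 2 := by ring
  have hpsi : vpPsi (2 * l * μ) (π / 2) t =
      -((-1) ^ (l * μ)) * Real.sin (μ * π / (2 * ν)) * (1 / a ^ 2 + 1 / b ^ 2) := by
    rw [vpPsi, harg1, harg2, hsin1, hsin2, ← ha, ← hb]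
    field_simp
    ring
  have habs : |vpPsi (2 * l * μ) (π / 2) t| =
      Real.sin (μ * π / (2 * ν)) * (1 / a ^ 2 + 1 / b ^ 2) := by
    rw [hpsi, abs_mul, abs_mul]
    rw [abs_neg, abs_pow, abs_neg, abs_one, one_pow, one_mul]
    rw [abs_of_pos hs, abs_of_pos (by positivity : (0:ℝ) < 1 / a ^ 2 + 1 / b ^ 2)]
  have hsinmt : Real.sin (2 * l * μ * t) = Real.sin (μ * π / (2 * ν)) := by
    rw [show (2 : ℝ) * l * μ * t = (2:ℝ) * ↑l * ↑μ * t from rfl, hmt']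
  constructor
  · rw [habs, hsinmt, abs_of_pos hs]
  · rw [habs]
    have h1 : 1 ≤ 1 / a ^ 2 := by
      rw [le_div_iff₀ (pow_pos ha0 2), one_mul]
      exact pow_le_one₀ ha0.le ha1
    have h2 : (0 : ℝ) < 1 / b ^ 2 := by positivity
    exact le_mul_of_one_le_right hs.le (by linarith)
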